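/- For every unsatisfiable SAT instance ψ with n > 2 variables and every r ≥ 2, the minimum length of a synchronizing word for the iterated construction A_r(ψ) is strictly greater than r(n − 1). -/

import Mathlib

/-- The three-letter alphabet {a, b, c}. -/
inductive Letter3 where
  | a | b | c
deriving DecidableEq

/-- Extension of a transition function to words (left-to-right action). -/
def runW {Q A : Type*} (δ : Q → A → Q) : Q → List A → Q
  | q, [] => q
  | q, x :: w => runW δ (δ q x) w

/-- States of Berlinkov's automaton A(ψ) for a SAT instance with m clauses and n
variables.  `q i j` encodes q_{i+1,j+1} (so `q ⟨m⟩ ⟨n⟩` is the state z₁),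
`p i j` encodes p_{i+1,j+1}, and `z0` is the zero state. -/
inductive St (m n : ℕ) where
  | q : Fin (m + 1) → Fin (n + 1) → St m n
  | p : Fin (m + 1) → Fin (n + 1) → St m n
  | z0 : St m n
deriving DecidableEq

/-- The transition function of Berlinkov's automaton A(ψ).  `pos i j` means the
literal x_{j+1} occurs in clause c_{i+1}; `neg i j` means ¬x_{j+1} occurs there. -/
def St.delta {m n : ℕ} (pos neg : Fin m → Fin n → Bool) : St m n → Letter3 → St m n
  | .q i j, .a =>
      if hj : (j : ℕ) < n then
        if hi : (i : ℕ) < m then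
          if pos ⟨i, hi⟩ ⟨j, hj⟩ then .z0 else .q i ⟨(j : ℕ) + 1, by omega⟩
        else .q i ⟨(j : ℕ) + 1, by omega⟩
      else if (i : ℕ) < m then .z0 else .q i ⟨0, by omega⟩
  | .q i j, .b =>
      if hj : (j : ℕ) < n then
        if hi : (i : ℕ) < m then
          if neg ⟨i, hi⟩ ⟨j, hj⟩ then .z0 else .q i ⟨(j : ℕ) + 1, by omega⟩
        else .q i ⟨(j : ℕ) + 1, by omega⟩
      else if (i : ℕ) < m then .z0 else .q i ⟨0, by omega⟩
  | .q i j, .c =>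
      if (j : ℕ) < n then .q i ⟨0, by omega⟩
      else if (i : ℕ) < m then .q ⟨m, by omega⟩ ⟨0, by omega⟩ else .z0
  | .p i j, x =>
      if hj : (j : ℕ) < n then .p i ⟨(j : ℕ) + 1, by omega⟩
      else match x with
        | .c => .q i ⟨0, by omega⟩
        | _ => .z0
  | .z0, _ => .z0

/-- Clause c_{i+1} is satisfied by the truth assignment τ. -/
def clauseSat {m n : ℕ} (pos neg : Fin m → Fin n → Bool) (τ : Fin n → Bool) (i : Fin m) : Prop :=
  ∃ j : Fin n, (pos i j = true ∧ τ j = true) ∨ (neg i j = true ∧ τ j = false)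

/-- The word v(τ) ∈ {a,b}ⁿ encoding a truth assignment. -/
def encWord {n : ℕ} (τ : Fin n → Bool) : List Letter3 :=
  List.ofFn fun j : Fin n => if τ j then Letter3.a else Letter3.b

/-- Nonzero states of the base automaton A₂(ψ) = A(ψ). -/
abbrev St' (m n : ℕ) := {s : St m n // s ≠ St.z0}

/-- State sets of the iterated construction: `QIter m n k` is the state set of
A_{k+2}(ψ), so `QIter m n 0 = Q₂` and `Q_{r} = Q_{r-1} ⊕ (Q₂ \ {z₀}) × Q_{r-1}`. -/
def QIter (m n : ℕ) : ℕ → Type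
  | 0 => St m n
  | k + 1 => QIter m n k ⊕ (St' m n × QIter m n k)

/-- The zero state of A_{k+2}(ψ). -/
def z0Iter (m n : ℕ) : (k : ℕ) → QIter m n k
  | 0 => St.z0
  | k + 1 => Sum.inl (z0Iter m n k)

/-- The set {q_{i,n+1} : i ≤ m} ∪ {q_{m+1,j} : 2 ≤ j ≤ n} ∪ {z₁} of states whose
pairs drop to the second component when mapped to q_{m+1,1}. -/
def dropSet {m n : ℕ} : St m n → Prop
  | St.q i j => ((i : ℕ) < m ∧ (j : ℕ) = n) ∨ ((i : ℕ) = m ∧ 1 ≤ (j : ℕ))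
  | _ => False

instance {m n : ℕ} : DecidablePred (dropSet (m := m) (n := n)) := by
  intro s
  cases s <;> simp only [dropSet] <;> infer_instance

/-- The transition function δ_r of the iterated construction A_{k+2}(ψ). -/
def deltaIter {m n : ℕ} (pos neg : Fin m → Fin n → Bool) :
    (k : ℕ) → QIter m n k → Letter3 → QIter m n k
  | 0, s, d => St.delta pos neg s d
  | k + 1, Sum.inl s, d => Sum.inl (deltaIter pos neg k s d)
  | k + 1, Sum.inr (q', q''), d =>
      if ht : St.delta pos neg q'.val d = St.z0 then
        Sum.inl (z0Iter m n k)
      else if St.delta pos neg q'.val d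
            = St.q ⟨m, Nat.lt_succ_self m⟩ ⟨0, Nat.succ_pos n⟩ ∧ dropSet q'.val then
        Sum.inl q''
      else
        Sum.inr (⟨St.delta pos neg q'.val d, ht⟩, q'')

namespace IterAux

variable {m n : ℕ} (pos neg : Fin m → Fin n → Bool)

/-- The state q_{m+1,1}. -/
def qm0 (m n : ℕ) : St m n := St.q ⟨m, Nat.lt_succ_self m⟩ ⟨0, Nat.succ_pos n⟩

/-- One-level scan of the pair dynamics of a first component: returns
`some (false, t)` if the pair dies (goes to zero) after `t` letters,
`some (true, t)` if it drops to the second component after `t` letters,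
`none` if it does not collapse within the word. -/
def scan : St m n → List Letter3 → Option (Bool × ℕ)
  | _, [] => none
  | q, d :: w =>
    if St.delta pos neg q d = St.z0 then some (false, 1)
    else if St.delta pos neg q d = qm0 m n ∧ dropSet q then some (true, 1)
    else (scan (St.delta pos neg q d) w).map fun z => (z.1, z.2 + 1)

@[simp] lemma scan_nil (q : St m n) : scan pos neg q [] = none := rfl

lemma scan_cons (q : St m n) (d : Letter3) (w : List Letter3) :
    scan pos neg q (d :: w)
      = if St.delta pos neg q d = St.z0 then some (false, 1)
        else if St.delta pos neg q d = qm0 m n ∧ dropSet q then some (true, 1)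
        else (scan pos neg (St.delta pos neg q d) w).map fun z => (z.1, z.2 + 1) := rfl

lemma runW_append {Q A : Type*} (δ : Q → A → Q) (s : Q) (u v : List A) :
    runW δ s (u ++ v) = runW δ (runW δ s u) v := by
  induction u generalizing s with
  | nil => rfl
  | cons d u ih => simp [runW, ih]

lemma runW_z0 (w : List Letter3) : runW (St.delta pos neg) .z0 w = (.z0 : St m n) := by
  induction w with
  | nil => rfl
  | cons d w ih => simpa [runW, St.delta] using ih

lemma deltaIter_z0 (k : ℕ) (d : Letter3) :
    deltaIter pos neg k (z0Iter m n k) d = z0Iter m n k := by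
  induction k with
  | zero => rfl
  | succ k ih => simp [deltaIter, z0Iter, ih]; rfl

lemma runW_z0Iter (k : ℕ) (w : List Letter3) :
    runW (deltaIter pos neg k) (z0Iter m n k) w = z0Iter m n k := by
  induction w with
  | nil => rfl
  | cons d w ih => simpa [runW, deltaIter_z0] using ih

lemma runW_inl (k : ℕ) (s : QIter m n k) (w : List Letter3) :
    runW (deltaIter pos neg (k+1)) (Sum.inl s) w
      = Sum.inl (runW (deltaIter pos neg k) s w) := by
  induction w generalizing s with
  | nil => rfl
  | cons d w ih => simp [runW, deltaIter, ih]; rfl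

lemma scan_some_le {q : St m n} {w : List Letter3} {z : Bool × ℕ}
    (h : scan pos neg q w = some z) : 1 ≤ z.2 ∧ z.2 ≤ w.length := by
  induction w generalizing q z with
  | nil => simp [scan] at h
  | cons d w ih =>
    rw [scan_cons] at h
    split at h
    · cases h; simp
    · split at h
      · cases h; simp
      · rcases Option.map_eq_some_iff.1 h with ⟨z', hz', rfl⟩
        have := ih hz'
        simp at this ⊢
        omega

lemma scan_append_some {q : St m n} {u : List Letter3} {z : Bool × ℕ}
    (h : scan pos neg q u = some z) (v : List Letter3) :
    scan pos neg q (u ++ v) = some z := by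
  induction u generalizing q z with
  | nil => simp [scan] at h
  | cons d u ih =>
    rw [scan_cons] at h
    rw [List.cons_append, scan_cons]
    split at h
    · rw [if_pos ‹_›]; exact h
    · rw [if_neg ‹_›]
      split at h
      · rw [if_pos ‹_›]; exact h
      · rw [if_neg ‹_›]
        rcases Option.map_eq_some_iff.1 h with ⟨z', hz', rfl⟩
        rw [ih hz']; rfl

lemma scan_append_none {q : St m n} {u : List Letter3}
    (h : scan pos neg q u = none) (v : List Letter3) :
    scan pos neg q (u ++ v)
      = (scan pos neg (runW (St.delta pos neg) q u) v).map fun z => (z.1, z.2 + u.length) := by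
  induction u generalizing q with
  | nil =>
    simp [runW]
  | cons d u ih =>
    rw [scan_cons] at h
    rw [List.cons_append, scan_cons]
    split at h
    · simp at h
    · rw [if_neg ‹_›]
      split at h
      · simp at h
      · rw [if_neg ‹_›]
        have h' : scan pos neg (St.delta pos neg q d) u = none := by
          cases hs : scan pos neg (St.delta pos neg q d) u <;> simp [hs] at h ⊢
        rw [ih h']
        simp [runW, Option.map_map]
        rfl

lemma scan_comp {q q' : St m n} {u v : List Letter3} {b : Bool} {t : ℕ}
    (h1 : scan pos neg q u = none) (h2 : runW (St.delta pos neg) q u = q')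
    (h3 : scan pos neg q' v = some (b, t)) :
    scan pos neg q (u ++ v) = some (b, t + u.length) := by
  rw [scan_append_none pos neg h1, h2, h3]; rfl

lemma scan_comp_none {q q' : St m n} {u v : List Letter3}
    (h1 : scan pos neg q u = none) (h2 : runW (St.delta pos neg) q u = q')
    (h3 : scan pos neg q' v = none) :
    scan pos neg q (u ++ v) = none := by
  rw [scan_append_none pos neg h1, h2, h3]; rfl

lemma deltaIter_inr (k : ℕ) (q' : St' m n) (x : QIter m n k) (d : Letter3) :
    deltaIter pos neg (k+1) (Sum.inr (q', x)) d
      = if ht : St.delta pos neg q'.val d = St.z0 then Sum.inl (z0Iter m n k)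
        else if St.delta pos neg q'.val d = qm0 m n ∧ dropSet q'.val then Sum.inl x
        else Sum.inr (⟨St.delta pos neg q'.val d, ht⟩, x) := rfl

lemma scan_drop_runW {q : St m n} {w : List Letter3} {t : ℕ}
    (h : scan pos neg q w = some (true, t)) (hq : q ≠ .z0) (k : ℕ) (x : QIter m n k) :
    runW (deltaIter pos neg (k+1)) (Sum.inr (⟨q, hq⟩, x)) w
      = Sum.inl (runW (deltaIter pos neg k) x (w.drop t)) := by
  induction w generalizing q t with
  | nil => simp at h
  | cons d w ih =>
    rw [scan_cons] at h
    simp only [runW, deltaIter_inr]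
    by_cases hdie : St.delta pos neg q d = St.z0
    · rw [if_pos hdie] at h; cases h
    · rw [if_neg hdie] at h
      rw [dif_neg hdie]
      by_cases hdrop : St.delta pos neg q d = qm0 m n ∧ dropSet q
      · rw [if_pos hdrop] at h
        rw [if_pos hdrop]
        obtain ⟨rfl⟩ : t = 1 := by cases h; rfl
        rw [runW_inl]
        rfl
      · rw [if_neg hdrop] at h
        rw [if_neg hdrop]
        rcases Option.map_eq_some_iff.1 h with ⟨⟨b', t'⟩, hz', hzz⟩
        obtain ⟨rfl, rfl⟩ : b' = true ∧ t = t' + 1 := by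
          cases hzz; exact ⟨rfl, rfl⟩
        rw [ih hz' hdie]
        rfl

lemma scan_none_runW {q : St m n} {w : List Letter3}
    (h : scan pos neg q w = none) (hq : q ≠ .z0) (k : ℕ) (x : QIter m n k) :
    ∃ y, runW (deltaIter pos neg (k+1)) (Sum.inr (⟨q, hq⟩, x)) w = Sum.inr y := by
  induction w generalizing q with
  | nil => exact ⟨_, rfl⟩
  | cons d w ih =>
    rw [scan_cons] at h
    simp only [runW, deltaIter_inr]
    by_cases hdie : St.delta pos neg q d = St.z0
    · rw [if_pos hdie] at h; cases h
    · rw [if_neg hdie] at h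
      rw [dif_neg hdie]
      by_cases hdrop : St.delta pos neg q d = qm0 m n ∧ dropSet q
      · rw [if_pos hdrop] at h; cases h
      · rw [if_neg hdrop] at h
        rw [if_neg hdrop]
        have h' : scan pos neg (St.delta pos neg q d) w = none := by
          cases hs : scan pos neg (St.delta pos neg q d) w <;> simp [hs] at h ⊢
        exact ih h' hdie

/-- embedding of clause indices -/
def fi {m : ℕ} (i : Fin m) : Fin (m+1) := ⟨i, by omega⟩

/-- the index m+1 -/
def fm (m : ℕ) : Fin (m+1) := ⟨m, Nat.lt_succ_self m⟩

section steps

lemma q_ne_z0 (i : Fin (m+1)) (j : Fin (n+1)) : (St.q i j : St m n) ≠ .z0 := fun h => by cases h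
lemma p_ne_z0 (i : Fin (m+1)) (j : Fin (n+1)) : (St.p i j : St m n) ≠ .z0 := fun h => by cases h

lemma delta_p_lt (i : Fin (m+1)) (j : Fin (n+1)) (hj : (j : ℕ) < n) (d : Letter3) :
    St.delta pos neg (.p i j) d = .p i ⟨(j:ℕ)+1, by omega⟩ := by
  cases d <;> simp [St.delta, hj]

lemma delta_pn_c (i : Fin (m+1)) (j : Fin (n+1)) (hj : (j : ℕ) = n) :
    St.delta pos neg (.p i j) .c = .q i ⟨0, by omega⟩ := by
  simp [St.delta, hj]

lemma delta_q_c_lt (i : Fin (m+1)) (j : Fin (n+1)) (hj : (j : ℕ) < n) :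
    St.delta pos neg (.q i j) .c = .q i ⟨0, by omega⟩ := by
  simp [St.delta, hj]

lemma delta_qn_c (i : Fin (m+1)) (j : Fin (n+1)) (hj : (j : ℕ) = n) (hi : (i:ℕ) < m) :
    St.delta pos neg (.q i j) .c = qm0 m n := by
  simp [St.delta, hj, hi, qm0]

lemma delta_qm_ab (j : Fin (n+1)) (hj : (j : ℕ) < n) (d : Letter3) (hd : d ≠ .c) :
    St.delta pos neg (.q (fm m) j) d = .q (fm m) ⟨(j:ℕ)+1, by omega⟩ := by
  cases d <;> simp [St.delta, hj, fm] at hd ⊢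

lemma delta_qmn_ab (j : Fin (n+1)) (hj : (j : ℕ) = n) (d : Letter3) (hd : d ≠ .c) :
    St.delta pos neg (.q (fm m) j) d = qm0 m n := by
  cases d <;> simp [St.delta, hj, fm, qm0] at hd ⊢

lemma delta_qi_a (i : Fin m) (j : Fin (n+1)) (hj : (j : ℕ) < n)
    (hp : pos i ⟨j, hj⟩ = false) :
    St.delta pos neg (.q (fi i) j) .a = .q (fi i) ⟨(j:ℕ)+1, by omega⟩ := by
  have hi : ((fi i : Fin (m+1)) : ℕ) < m := i.2
  simp only [St.delta, dif_pos hj, dif_pos hi]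
  rw [if_neg]
  rw [show (⟨(fi i : ℕ), hi⟩ : Fin m) = i from Fin.ext rfl, hp]
  simp

lemma delta_qi_b (i : Fin m) (j : Fin (n+1)) (hj : (j : ℕ) < n)
    (hp : neg i ⟨j, hj⟩ = false) :
    St.delta pos neg (.q (fi i) j) .b = .q (fi i) ⟨(j:ℕ)+1, by omega⟩ := by
  have hi : ((fi i : Fin (m+1)) : ℕ) < m := i.2
  simp only [St.delta, dif_pos hj, dif_pos hi]
  rw [if_neg]
  rw [show (⟨(fi i : ℕ), hi⟩ : Fin m) = i from Fin.ext rfl, hp]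
  simp

lemma dropSet_q0 (hn0 : 0 < n) (i : Fin (m+1)) : ¬ dropSet (.q i (⟨0, by omega⟩ : Fin (n+1)) : St m n) := by
  simp [dropSet]; omega

lemma not_qm0_succ (i : Fin (m+1)) (j : ℕ) (h : j + 1 ≤ n) :
    (St.q i ⟨j+1, by omega⟩ : St m n) ≠ qm0 m n := by
  simp [qm0, St.q.injEq, Fin.ext_iff]

lemma p_not_qm0 (i : Fin (m+1)) (j : Fin (n+1)) : (St.p i j : St m n) ≠ qm0 m n := by
  simp [qm0]

end steps

section climbs

/-- scanning a block of `c`'s from a state `q i 0`. -/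
lemma scan_cblock (hn0 : 0 < n) (i : Fin (m+1)) (s : ℕ) :
    scan pos neg (.q i ⟨0, by omega⟩) (List.replicate s .c) = none ∧
    runW (St.delta pos neg) (.q i ⟨0, by omega⟩) (List.replicate s .c)
      = (.q i ⟨0, by omega⟩ : St m n) := by
  induction s with
  | zero => exact ⟨rfl, rfl⟩
  | succ s ih =>
    have hst := delta_q_c_lt pos neg i ⟨0, by omega⟩ hn0
    rw [List.replicate_succ]
    constructor
    · rw [scan_cons, if_neg (by rw [hst]; exact q_ne_z0 _ _),
        if_neg (fun h => dropSet_q0 hn0 i h.2)]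
      rw [hst, ih.1]
      rfl
    · show runW _ (St.delta pos neg _ .c) _ = _
      rw [hst, ih.2]

/-- climbing `p`-states: any letters. -/
lemma scan_pclimb (i : Fin (m+1)) :
    ∀ (u : List Letter3) (j : Fin (n+1)), (hj : (j:ℕ) + u.length ≤ n) →
    scan pos neg (.p i j) u = none ∧
    runW (St.delta pos neg) (.p i j) u = (.p i ⟨(j:ℕ) + u.length, by omega⟩ : St m n) := by
  intro u
  induction u with
  | nil => intro j hj; exact ⟨rfl, by simp [runW]⟩
  | cons d u ih =>
    intro j hj
    simp only [List.length_cons] at hj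
    have hjlt : (j:ℕ) < n := by omega
    have hst := delta_p_lt pos neg i j hjlt d
    have ih' := ih ⟨(j:ℕ)+1, by omega⟩ (by simpa using by omega)
    constructor
    · rw [scan_cons, if_neg (by rw [hst]; exact p_ne_z0 _ _),
        if_neg (fun h => by exact absurd h.1 (by rw [hst]; exact p_not_qm0 _ _))]
      rw [hst, ih'.1]
      rfl
    · show runW _ (St.delta pos neg _ d) _ = _
      rw [hst, ih'.2]
      congr 1
      simp [Fin.ext_iff]
      omega

/-- climbing `q (fm m)`-states on non-`c` letters. -/
lemma scan_qmclimb :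
    ∀ (u : List Letter3), (∀ x ∈ u, x ≠ Letter3.c) →
    ∀ (j : Fin (n+1)), (hj : (j:ℕ) + u.length ≤ n) →
    scan pos neg (.q (fm m) j) u = none ∧
    runW (St.delta pos neg) (.q (fm m) j) u
      = (.q (fm m) ⟨(j:ℕ) + u.length, by omega⟩ : St m n) := by
  intro u
  induction u with
  | nil => intro _ j hj; exact ⟨rfl, by simp [runW]⟩
  | cons d u ih =>
    intro hu j hj
    simp only [List.length_cons] at hj
    have hjlt : (j:ℕ) < n := by omega
    have hst := delta_qm_ab pos neg j hjlt d (hu d (by simp))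
    have ih' := ih (fun x hx => hu x (by simp [hx])) ⟨(j:ℕ)+1, by omega⟩ (by simpa using by omega)
    constructor
    · rw [scan_cons, if_neg (by rw [hst]; exact q_ne_z0 _ _),
        if_neg (fun h => by exact absurd h.1 (by rw [hst]; exact not_qm0_succ _ _ (by omega)))]
      rw [hst, ih'.1]
      rfl
    · show runW _ (St.delta pos neg _ d) _ = _
      rw [hst, ih'.2]
      congr 1
      simp [Fin.ext_iff]
      omega

/-- climbing a clause state `q (fi i) j` along non-hitting non-`c` letters. -/
lemma scan_qiclimb (i : Fin m) :
    ∀ (u : List Letter3) (j : Fin (n+1)), (hj : (j:ℕ) + u.length ≤ n) →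
    (hu : ∀ (l : ℕ), l < u.length → ∀ (hjl : (j:ℕ) + l < n),
      (u.getD l .c = .a → pos i ⟨(j:ℕ)+l, hjl⟩ = false) ∧
      (u.getD l .c = .b → neg i ⟨(j:ℕ)+l, hjl⟩ = false) ∧ u.getD l .c ≠ .c) →
    scan pos neg (.q (fi i) j) u = none ∧
    runW (St.delta pos neg) (.q (fi i) j) u
      = (.q (fi i) ⟨(j:ℕ) + u.length, by omega⟩ : St m n) := by
  intro u
  induction u with
  | nil => intro j hj _; exact ⟨rfl, by simp [runW]⟩
  | cons d u ih =>
    intro j hj hu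
    simp only [List.length_cons] at hj
    have hjlt : (j:ℕ) < n := by omega
    have h0 := hu 0 (by simp) (by omega)
    simp only [List.getD_cons_zero, Nat.add_zero] at h0
    have hst : St.delta pos neg (.q (fi i) j) d = .q (fi i) ⟨(j:ℕ)+1, by omega⟩ := by
      cases d with
      | a => exact delta_qi_a pos neg i j hjlt (h0.1 rfl)
      | b => exact delta_qi_b pos neg i j hjlt (h0.2.1 rfl)
      | c => exact absurd rfl h0.2.2
    have ih' := ih ⟨(j:ℕ)+1, by omega⟩ (by simpa using by omega) (by
      intro l hl hjl
      have := hu (l+1) (by simpa using hl) (by omega)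
      simpa [Nat.add_assoc, Nat.add_comm 1 l, Nat.add_left_comm] using this)
    constructor
    · rw [scan_cons, if_neg (by rw [hst]; exact q_ne_z0 _ _),
        if_neg (fun h => by exact absurd h.1 (by rw [hst]; exact not_qm0_succ _ _ (by omega)))]
      rw [hst, ih'.1]
      rfl
    · show runW _ (St.delta pos neg _ d) _ = _
      rw [hst, ih'.2]
      congr 1
      simp [Fin.ext_iff]
      omega

end climbs

/-- killing `q (fm m) j` needs at least `n + 1 - j` letters. -/
lemma dieLB :
    ∀ (v : List Letter3) (j : Fin (n+1)),
      runW (St.delta pos neg) (.q (fm m) j) v = .z0 → n + 1 - (j:ℕ) ≤ v.length := by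
  intro v
  induction v with
  | nil => intro j h; exact absurd h (q_ne_z0 _ _)
  | cons d v ih =>
    intro j h
    simp only [runW] at h
    by_cases hj : (j:ℕ) < n
    · cases d with
      | c =>
        rw [delta_q_c_lt pos neg _ j hj] at h
        have := ih _ h
        simp at this ⊢
        omega
      | a =>
        rw [delta_qm_ab pos neg j hj .a (by simp)] at h
        have := ih _ h
        simp at this ⊢
        omega
      | b =>
        rw [delta_qm_ab pos neg j hj .b (by simp)] at h
        have := ih _ h
        simp at this ⊢
        omega
    · have hj' : (j:ℕ) = n := by omega
      simp only [List.length_cons]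
      cases d with
      | c => omega
      | a =>
        rw [delta_qmn_ab pos neg j hj' .a (by simp)] at h
        have := ih _ h
        simp [qm0] at this
        omega
      | b =>
        rw [delta_qmn_ab pos neg j hj' .b (by simp)] at h
        have := ih _ h
        simp [qm0] at this
        omega

def isC : Letter3 → Bool := fun x => match x with | .c => true | _ => false

lemma isC_iff (x : Letter3) : isC x = true ↔ x = .c := by cases x <;> simp [isC]

lemma dropWhile_head_not {α} (p : α → Bool) :
    ∀ (l : List α) {d : α} {t : List α}, l.dropWhile p = d :: t → ¬ p d = true := by
  intro l
  induction l with
  | nil => intro d t h; cases h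
  | cons x xs ih =>
    intro d t h
    rw [List.dropWhile_cons] at h
    split at h
    · exact ih h
    · cases h; assumption

/-- arrival invariant: for each row `i` there is a live witness that reaches
`q i 0` at the end of `w_pre` without its pair collapsing. -/
def Harr (w_pre : List Letter3) : Prop :=
  ∀ i : Fin (m+1), ∃ q₀ : St m n, q₀ ≠ .z0 ∧ scan pos neg q₀ w_pre = none ∧
    runW (St.delta pos neg) q₀ w_pre = .q i ⟨0, Nat.succ_pos n⟩

lemma Harr_nil : Harr pos neg ([] : List Letter3) :=
  fun i => ⟨.q i ⟨0, Nat.succ_pos n⟩, q_ne_z0 _ _, rfl, rfl⟩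

lemma Harr_spawn (u : List Letter3) (hu : u.length ≤ n) :
    Harr pos neg (u ++ [Letter3.c]) := by
  intro i
  have hle : ((⟨n - u.length, by omega⟩ : Fin (n+1)) : ℕ) + u.length ≤ n := by simp; omega
  have hp := scan_pclimb pos neg i u ⟨n - u.length, by omega⟩ hle
  have hend : ((⟨n - u.length, by omega⟩ : Fin (n+1)) : ℕ) + u.length = n := by simp; omega
  refine ⟨.p i ⟨n - u.length, by omega⟩, p_ne_z0 _ _, ?_, ?_⟩
  · rw [scan_comp_none pos neg hp.1 hp.2]
    rw [scan_cons]
    rw [if_neg (by rw [delta_pn_c pos neg i _ hend]; exact q_ne_z0 _ _)]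
    rw [if_neg (fun h => by simpa [dropSet] using h.2)]
    rw [delta_pn_c pos neg i _ hend]
    rfl
  · rw [runW_append, hp.2]
    simp only [runW]
    exact delta_pn_c pos neg i _ hend

lemma coreAux (hn : 2 < n)
    (hunsat : ∀ τ : Fin n → Bool, ∃ i : Fin m, ¬ clauseSat pos neg τ i)
    (w : List Letter3)
    (Hscan : ∀ q : St m n, q ≠ .z0 → (scan pos neg q w).isSome) :
    ∀ (N : ℕ) (w_pre w' : List Letter3), w'.length ≤ N →
      w = w_pre ++ w' → w_pre.length + 2 ≤ n → Harr pos neg w_pre →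
      ∃ (q₀ : St m n) (t : ℕ), q₀ ≠ .z0 ∧ scan pos neg q₀ w = some (true, t) ∧ n - 1 ≤ t := by
  intro N
  induction N with
  | zero =>
    intro w_pre w' hlen hw hpre harr
    obtain ⟨q₀, hne, hsc, _⟩ := harr (fm m)
    have hnil : w' = [] := List.eq_nil_of_length_eq_zero (Nat.le_zero.1 hlen)
    subst hnil
    have h2 := Hscan q₀ hne
    rw [hw, List.append_nil, hsc] at h2
    simp at h2
  | succ N ih =>
    intro w_pre w' hlen hw hpre harr
    -- decompose w' into a block of c's, a run of non-c's, and the rest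
    set cs := w'.takeWhile isC with hcs
    set w'' := w'.dropWhile isC with hw''
    have hsplit1 : w' = cs ++ w'' := (List.takeWhile_append_dropWhile (p := isC) (l := w')).symm
    have hcsrep : cs = List.replicate cs.length .c := by
      refine List.eq_replicate_of_mem (fun b hb => ?_)
      have := List.mem_takeWhile_imp hb
      exact (isC_iff b).1 this
    set run := w''.takeWhile (fun x => !isC x) with hrun
    set rest := w''.dropWhile (fun x => !isC x) with hrest
    have hsplit2 : w'' = run ++ rest :=
      (List.takeWhile_append_dropWhile (p := fun x => !isC x) (l := w'')).symm
    have hrunnc : ∀ x ∈ run, x ≠ Letter3.c := by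
      intro x hx hxc
      have := List.mem_takeWhile_imp hx
      rw [hxc] at this
      simp [isC] at this
    obtain ⟨q₀, hne, hsc, hrw⟩ := harr (fm m)
    by_cases hr : n + 1 ≤ run.length
    · -- case 1: long run, the q_m-witness drops inside the run
      have hdlen : run.drop n ≠ [] := by
        intro h
        have h2 := List.length_drop (i := n) (l := run)
        rw [h] at h2
        simp at h2
        omega
      obtain ⟨d, tail, hdt⟩ := List.exists_cons_of_ne_nil hdlen
      have hdne : d ≠ Letter3.c := by
        refine hrunnc d ?_
        have : d ∈ run.drop n := by rw [hdt]; simp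
        exact List.mem_of_mem_drop this
      have htakelen : (run.take n).length = n := by
        rw [List.length_take]; omega
      -- scans
      have s2 := scan_cblock pos neg (by omega) (fm m) cs.length
      have s3 := scan_qmclimb pos neg (run.take n)
        (fun x hx => hrunnc x (List.mem_of_mem_take hx)) ⟨0, by omega⟩
        (by show (0:ℕ) + (List.take n run).length ≤ n; omega)
      have hmid : scan pos neg q₀ ((w_pre ++ cs) ++ run.take n) = none ∧
          runW (St.delta pos neg) q₀ ((w_pre ++ cs) ++ run.take n)
            = .q (fm m) ⟨n, by omega⟩ := by
        constructor
        · refine scan_comp_none pos neg (scan_comp_none pos neg hsc hrw ?_) ?_ s3.1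
          · rw [hcsrep]; exact s2.1
          · rw [runW_append, hrw, hcsrep, s2.2]
        · rw [runW_append, runW_append, hrw, hcsrep, s2.2, s3.2]
          congr 1
          apply Fin.ext
          simp [htakelen]
      have s4 : scan pos neg (.q (fm m) ⟨n, by omega⟩) (d :: (tail ++ rest)) = some (true, 1) := by
        rw [scan_cons, delta_qmn_ab pos neg _ rfl d hdne]
        rw [if_neg (by simp [qm0]), if_pos ⟨rfl, Or.inr ⟨rfl, show (1:ℕ) ≤ n by omega⟩⟩]
      have hweq : w = ((w_pre ++ cs) ++ run.take n) ++ (d :: (tail ++ rest)) := by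
        rw [hw, hsplit1, hsplit2]
        conv_lhs => rw [← List.take_append_drop n run, hdt]
        simp
      refine ⟨q₀, 1 + ((w_pre ++ cs) ++ run.take n).length, hne, ?_, ?_⟩
      · rw [hweq]; exact scan_comp pos neg hmid.1 hmid.2 s4
      · simp [htakelen]; omega
    · -- short run
      cases hrestc : rest with
      | nil =>
        -- case 2: word ends without collapse of the q_m-witness: contradiction
        have s2 := scan_cblock pos neg (by omega) (fm m) cs.length
        have s3 := scan_qmclimb pos neg run hrunnc ⟨0, by omega⟩ (by simp; omega)
        have hnone : scan pos neg q₀ w = none := by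
          rw [hw, hsplit1, hsplit2, hrestc, List.append_nil, ← List.append_assoc]
          refine scan_comp_none pos neg (scan_comp_none pos neg hsc hrw ?_) ?_ s3.1
          · rw [hcsrep]; exact s2.1
          · rw [runW_append, hrw, hcsrep, s2.2]
        have h2 := Hscan q₀ hne
        rw [hnone] at h2
        simp at h2
      | cons d rest' =>
        have hd : d = Letter3.c := by
          have := dropWhile_head_not (fun x => !isC x) w'' hrestc
          simp [isC_iff] at this
          exact this
        subst hd
        have hr1 : 1 ≤ run.length := by
          rcases Nat.eq_zero_or_pos run.length with h0 | h1
          · exfalso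
            rw [List.length_eq_zero_iff] at h0
            rw [h0] at hsplit2
            simp at hsplit2
            have := dropWhile_head_not isC w' (by rw [← hw'', hsplit2, hrestc])
            simp [isC] at this
          · exact h1
        by_cases hrn : run.length = n
        · -- case 3a: full run followed by c: clause witness drops late
          obtain ⟨i₀, hi₀⟩ := hunsat (fun jj => decide (run.getD (jj : ℕ) .c = Letter3.a))
          obtain ⟨q₁, hne1, hsc1, hrw1⟩ := harr (fi i₀)
          have s2 := scan_cblock pos neg (by omega) (fi i₀) cs.length
          have s3 := scan_qiclimb pos neg i₀ run ⟨0, by omega⟩ (by simp; omega) (by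
            intro l hl hjl
            have hjl' : l < n := by simpa using hjl
            have efin : (⟨((⟨0, by omega⟩ : Fin (n+1)) : ℕ) + l, hjl⟩ : Fin n) = ⟨l, hjl'⟩ := by
              apply Fin.ext; simp
            rw [efin]
            have hget : run.getD l .c ∈ run := by
              rw [List.getD_eq_getElem run .c hl]
              exact List.getElem_mem _
            refine ⟨fun ha => ?_, fun hbb => ?_, fun hc => hrunnc _ hget hc⟩
            · by_contra hb
              have hb' : pos i₀ ⟨l, hjl'⟩ = true := by
                revert hb; cases pos i₀ ⟨l, hjl'⟩ <;> simp
              exact hi₀ ⟨⟨l, hjl'⟩, Or.inl ⟨hb', decide_eq_true ha⟩⟩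
            · by_contra hb
              have hb' : neg i₀ ⟨l, hjl'⟩ = true := by
                revert hb; cases neg i₀ ⟨l, hjl'⟩ <;> simp
              refine hi₀ ⟨⟨l, hjl'⟩, Or.inr ⟨hb', decide_eq_false ?_⟩⟩
              rw [hbb]
              exact fun h => Letter3.noConfusion h)
          have hmid : scan pos neg q₁ ((w_pre ++ cs) ++ run) = none ∧
              runW (St.delta pos neg) q₁ ((w_pre ++ cs) ++ run)
                = .q (fi i₀) ⟨n, by omega⟩ := by
            constructor
            · refine scan_comp_none pos neg (scan_comp_none pos neg hsc1 hrw1 ?_) ?_ s3.1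
              · rw [hcsrep]; exact s2.1
              · rw [runW_append, hrw1, hcsrep, s2.2]
            · rw [runW_append, runW_append, hrw1, hcsrep, s2.2, s3.2]
              congr 1
              apply Fin.ext
              simp [hrn]
          have s4 : scan pos neg (.q (fi i₀) ⟨n, by omega⟩) (Letter3.c :: rest')
              = some (true, 1) := by
            rw [scan_cons, delta_qn_c pos neg _ _ rfl i₀.2]
            rw [if_neg (by simp [qm0]), if_pos ⟨rfl, Or.inl ⟨i₀.2, rfl⟩⟩]
          have hweq : w = ((w_pre ++ cs) ++ run) ++ (Letter3.c :: rest') := by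
            rw [hw, hsplit1, hsplit2, hrestc]; simp
          refine ⟨q₁, 1 + ((w_pre ++ cs) ++ run).length, hne1, ?_, ?_⟩
          · rw [hweq]; exact scan_comp pos neg hmid.1 hmid.2 s4
          · simp [hrn]; omega
        · -- case 3b: short run followed by c: q_m-witness drops (early or late)
          have hrlt : run.length < n := by omega
          have s2 := scan_cblock pos neg (by omega) (fm m) cs.length
          have s3 := scan_qmclimb pos neg run hrunnc ⟨0, by omega⟩ (by simp; omega)
          have hmid : scan pos neg q₀ ((w_pre ++ cs) ++ run) = none ∧
              runW (St.delta pos neg) q₀ ((w_pre ++ cs) ++ run)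
                = .q (fm m) ⟨run.length, by omega⟩ := by
            constructor
            · refine scan_comp_none pos neg (scan_comp_none pos neg hsc hrw ?_) ?_ s3.1
              · rw [hcsrep]; exact s2.1
              · rw [runW_append, hrw, hcsrep, s2.2]
            · rw [runW_append, runW_append, hrw, hcsrep, s2.2, s3.2]
              congr 1
              apply Fin.ext
              simp
          have s4 : scan pos neg (.q (fm m) ⟨run.length, by omega⟩) (Letter3.c :: rest')
              = some (true, 1) := by
            rw [scan_cons, delta_q_c_lt pos neg _ _ hrlt]
            rw [if_neg (by exact q_ne_z0 _ _), if_pos ⟨rfl, Or.inr ⟨rfl, show (1:ℕ) ≤ run.length by omega⟩⟩]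
          have hweq : w = ((w_pre ++ cs) ++ run) ++ (Letter3.c :: rest') := by
            rw [hw, hsplit1, hsplit2, hrestc]; simp
          have hscant : scan pos neg q₀ w = some (true, 1 + ((w_pre ++ cs) ++ run).length) := by
            rw [hweq]; exact scan_comp pos neg hmid.1 hmid.2 s4
          have hLw : ((w_pre ++ cs) ++ run).length
              = w_pre.length + cs.length + run.length := by simp; omega
          by_cases hts : n - 1 ≤ 1 + ((w_pre ++ cs) ++ run).length
          · exact ⟨q₀, _, hne, hscant, hts⟩
          · -- recurse on the suffix after the early drop
            have hulen : ((w_pre ++ cs) ++ run).length ≤ n := by omega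
            have hwlen : w'.length = cs.length + (run.length + (1 + rest'.length)) := by
              rw [hsplit1, hsplit2, hrestc]; simp; omega
            refine ih (((w_pre ++ cs) ++ run) ++ [Letter3.c]) rest' ?_ ?_ ?_
              (Harr_spawn pos neg _ hulen)
            · omega
            · rw [hweq]; simp
            · simp only [List.length_append, List.length_cons, List.length_nil]
              omega

lemma baseAux (hn : 2 < n)
    (hunsat : ∀ τ : Fin n → Bool, ∃ i : Fin m, ¬ clauseSat pos neg τ i)
    (w : List Letter3)
    (Hbase : ∀ s : St m n, runW (St.delta pos neg) s w = .z0) :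
    ∀ (N : ℕ) (w_pre w' : List Letter3), w'.length ≤ N →
      w = w_pre ++ w' → w_pre.length + 2 ≤ n → Harr pos neg w_pre →
      2 * n - 1 ≤ w.length := by
  intro N
  induction N with
  | zero =>
    intro w_pre w' hlen hw hpre harr
    obtain ⟨q₀, hne, _, hrw⟩ := harr (fm m)
    have hnil : w' = [] := List.eq_nil_of_length_eq_zero (Nat.le_zero.1 hlen)
    subst hnil
    have h2 := Hbase q₀
    rw [hw, List.append_nil, hrw] at h2
    exact absurd h2 (q_ne_z0 _ _)
  | succ N ih =>
    intro w_pre w' hlen hw hpre harr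
    set cs := w'.takeWhile isC with hcs
    set w'' := w'.dropWhile isC with hw''
    have hsplit1 : w' = cs ++ w'' := (List.takeWhile_append_dropWhile (p := isC) (l := w')).symm
    have hcsrep : cs = List.replicate cs.length .c := by
      refine List.eq_replicate_of_mem (fun x hx => ?_)
      have := List.mem_takeWhile_imp hx
      exact (isC_iff x).1 this
    set run := w''.takeWhile (fun x => !isC x) with hrun
    set rest := w''.dropWhile (fun x => !isC x) with hrest
    have hsplit2 : w'' = run ++ rest :=
      (List.takeWhile_append_dropWhile (p := fun x => !isC x) (l := w'')).symm
    have hrunnc : ∀ x ∈ run, x ≠ Letter3.c := by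
      intro x hx hxc
      have := List.mem_takeWhile_imp hx
      rw [hxc] at this
      simp [isC] at this
    obtain ⟨q₀, hne, hsc, hrw⟩ := harr (fm m)
    by_cases hr : n + 1 ≤ run.length
    · -- case 1: long run: the q_m-witness wraps to q_m0, which still needs n+1 letters
      have hdlen : run.drop n ≠ [] := by
        intro h
        have h2 := List.length_drop (i := n) (l := run)
        rw [h] at h2
        simp at h2
        omega
      obtain ⟨d, tail, hdt⟩ := List.exists_cons_of_ne_nil hdlen
      have hdne : d ≠ Letter3.c := by
        refine hrunnc d ?_
        have : d ∈ run.drop n := by rw [hdt]; simp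
        exact List.mem_of_mem_drop this
      have htakelen : (run.take n).length = n := by
        rw [List.length_take]; omega
      have s2 := scan_cblock pos neg (by omega) (fm m) cs.length
      have s3 := scan_qmclimb pos neg (run.take n)
        (fun x hx => hrunnc x (List.mem_of_mem_take hx)) ⟨0, by omega⟩
        (by show (0:ℕ) + (List.take n run).length ≤ n; omega)
      have hmid : runW (St.delta pos neg) q₀ ((w_pre ++ cs) ++ run.take n)
            = .q (fm m) ⟨n, by omega⟩ := by
        rw [runW_append, runW_append, hrw, hcsrep, s2.2, s3.2]
        congr 1
        apply Fin.ext
        simp [htakelen]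
      have hstep : runW (St.delta pos neg) q₀ (((w_pre ++ cs) ++ run.take n) ++ [d])
            = .q (fm m) ⟨0, by omega⟩ := by
        rw [runW_append, hmid]
        simp only [runW]
        exact delta_qmn_ab pos neg _ rfl d hdne
      have hweq : w = (((w_pre ++ cs) ++ run.take n) ++ [d]) ++ (tail ++ rest) := by
        rw [hw, hsplit1, hsplit2]
        conv_lhs => rw [← List.take_append_drop n run, hdt]
        simp
      have hdie : runW (St.delta pos neg) (.q (fm m) ⟨0, by omega⟩) (tail ++ rest) = .z0 := by
        have h2 := Hbase q₀
        rw [hweq, runW_append, hstep] at h2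
        exact h2
      have hlb := dieLB pos neg (tail ++ rest) ⟨0, by omega⟩ hdie
      have : w.length = (((w_pre ++ cs) ++ run.take n) ++ [d]).length + (tail ++ rest).length := by
        rw [hweq]; simp; omega
      simp only [List.length_append, List.length_cons, List.length_nil, htakelen] at this
      simp at hlb
      omega
    · cases hrestc : rest with
      | nil =>
        have s2 := scan_cblock pos neg (by omega) (fm m) cs.length
        have s3 := scan_qmclimb pos neg run hrunnc ⟨0, by omega⟩
          (by show (0:ℕ) + run.length ≤ n; omega)
        have h2 := Hbase q₀
        rw [hw, hsplit1, hsplit2, hrestc, List.append_nil, ← List.append_assoc,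
          runW_append, runW_append, hrw, hcsrep, s2.2, s3.2] at h2
        exact absurd h2 (q_ne_z0 _ _)
      | cons d rest' =>
        have hd : d = Letter3.c := by
          have := dropWhile_head_not (fun x => !isC x) w'' hrestc
          simp [isC_iff] at this
          exact this
        subst hd
        have hr1 : 1 ≤ run.length := by
          rcases Nat.eq_zero_or_pos run.length with h0 | h1
          · exfalso
            rw [List.length_eq_zero_iff] at h0
            rw [h0] at hsplit2
            simp at hsplit2
            have := dropWhile_head_not isC w' (by rw [← hw'', hsplit2, hrestc])
            simp [isC] at this
          · exact h1
        by_cases hrn : run.length = n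
        · -- case 3a: clause witness reaches q_m0 late, which still needs n+1 letters
          obtain ⟨i₀, hi₀⟩ := hunsat (fun jj => decide (run.getD (jj : ℕ) .c = Letter3.a))
          obtain ⟨q₁, hne1, hsc1, hrw1⟩ := harr (fi i₀)
          have s2 := scan_cblock pos neg (by omega) (fi i₀) cs.length
          have s3 := scan_qiclimb pos neg i₀ run ⟨0, by omega⟩
            (by show (0:ℕ) + run.length ≤ n; omega) (by
            intro l hl hjl
            have hjl' : l < n := by simpa using hjl
            have efin : (⟨((⟨0, by omega⟩ : Fin (n+1)) : ℕ) + l, hjl⟩ : Fin n) = ⟨l, hjl'⟩ := by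
              apply Fin.ext; simp
            rw [efin]
            have hget : run.getD l .c ∈ run := by
              rw [List.getD_eq_getElem run .c hl]
              exact List.getElem_mem _
            refine ⟨fun ha => ?_, fun hbb => ?_, fun hc => hrunnc _ hget hc⟩
            · by_contra hb
              have hb' : pos i₀ ⟨l, hjl'⟩ = true := by
                revert hb; cases pos i₀ ⟨l, hjl'⟩ <;> simp
              exact hi₀ ⟨⟨l, hjl'⟩, Or.inl ⟨hb', decide_eq_true ha⟩⟩
            · by_contra hb
              have hb' : neg i₀ ⟨l, hjl'⟩ = true := by
                revert hb; cases neg i₀ ⟨l, hjl'⟩ <;> simp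
              refine hi₀ ⟨⟨l, hjl'⟩, Or.inr ⟨hb', decide_eq_false ?_⟩⟩
              rw [hbb]
              exact fun h => Letter3.noConfusion h)
          have hmid : runW (St.delta pos neg) q₁ ((w_pre ++ cs) ++ run)
                = .q (fi i₀) ⟨n, by omega⟩ := by
            rw [runW_append, runW_append, hrw1, hcsrep, s2.2, s3.2]
            congr 1
            apply Fin.ext
            simp [hrn]
          have hstep : runW (St.delta pos neg) q₁ (((w_pre ++ cs) ++ run) ++ [Letter3.c])
                = .q (fm m) ⟨0, by omega⟩ := by
            rw [runW_append, hmid]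
            simp only [runW]
            exact delta_qn_c pos neg _ _ rfl i₀.2
          have hweq : w = (((w_pre ++ cs) ++ run) ++ [Letter3.c]) ++ rest' := by
            rw [hw, hsplit1, hsplit2, hrestc]; simp
          have hdie : runW (St.delta pos neg) (.q (fm m) ⟨0, by omega⟩) rest' = .z0 := by
            have h2 := Hbase q₁
            rw [hweq, runW_append, hstep] at h2
            exact h2
          have hlb := dieLB pos neg rest' ⟨0, by omega⟩ hdie
          have : w.length = (((w_pre ++ cs) ++ run) ++ [Letter3.c]).length + rest'.length := by
            rw [hweq]; simp; omega
          simp only [List.length_append, List.length_cons, List.length_nil] at this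
          simp at hlb
          omega
        · -- case 3b: reset: either already deep enough, or recurse
          have hrlt : run.length < n := by omega
          have s2 := scan_cblock pos neg (by omega) (fm m) cs.length
          have s3 := scan_qmclimb pos neg run hrunnc ⟨0, by omega⟩
            (by show (0:ℕ) + run.length ≤ n; omega)
          have hmid : runW (St.delta pos neg) q₀ ((w_pre ++ cs) ++ run)
                = .q (fm m) ⟨run.length, by omega⟩ := by
            rw [runW_append, runW_append, hrw, hcsrep, s2.2, s3.2]
            congr 1
            apply Fin.ext
            simp
          have hstep : runW (St.delta pos neg) q₀ (((w_pre ++ cs) ++ run) ++ [Letter3.c])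
                = .q (fm m) ⟨0, by omega⟩ := by
            rw [runW_append, hmid]
            simp only [runW]
            exact delta_q_c_lt pos neg _ _ hrlt
          have hweq : w = (((w_pre ++ cs) ++ run) ++ [Letter3.c]) ++ rest' := by
            rw [hw, hsplit1, hsplit2, hrestc]; simp
          have hLw : ((w_pre ++ cs) ++ run).length
              = w_pre.length + cs.length + run.length := by simp; omega
          by_cases hts : n - 2 ≤ ((w_pre ++ cs) ++ run).length + 1
          · have hdie : runW (St.delta pos neg) (.q (fm m) ⟨0, by omega⟩) rest' = .z0 := by
              have h2 := Hbase q₀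
              rw [hweq, runW_append, hstep] at h2
              exact h2
            have hlb := dieLB pos neg rest' ⟨0, by omega⟩ hdie
            have : w.length = (((w_pre ++ cs) ++ run) ++ [Letter3.c]).length + rest'.length := by
              rw [hweq]; simp; omega
            simp only [List.length_append, List.length_cons, List.length_nil] at this
            simp at hlb
            omega
          · have hulen : ((w_pre ++ cs) ++ run).length ≤ n := by omega
            have hwlen : w'.length = cs.length + (run.length + (1 + rest'.length)) := by
              rw [hsplit1, hsplit2, hrestc]; simp; omega
            refine ih (((w_pre ++ cs) ++ run) ++ [Letter3.c]) rest' ?_ ?_ ?_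
              (Harr_spawn pos neg _ hulen)
            · omega
            · rw [hweq]
            · simp only [List.length_append, List.length_cons, List.length_nil]
              omega

/-- For a base-synchronizing word, the common image is z₀. -/
lemma base_bound (hn : 2 < n)
    (hunsat : ∀ τ : Fin n → Bool, ∃ i : Fin m, ¬ clauseSat pos neg τ i)
    (w : List Letter3)
    (hw : ∃ p : St m n, ∀ s : St m n, runW (St.delta pos neg) s w = p) :
    2 * (n - 1) < w.length := by
  obtain ⟨p, hp⟩ := hw
  have hz : p = .z0 := by rw [← hp .z0, runW_z0]
  subst hz
  have := baseAux pos neg hn hunsat w hp w.length [] w le_rfl (by simp) (by simp; omega)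
    (Harr_nil pos neg)
  omega

end IterAux

/-- For every unsatisfiable ψ with n > 2 variables and every r ≥ 2 (here r = k+2),
every synchronizing word of the iterated automaton A_r(ψ) has length strictly
greater than r(n−1). -/
theorem iterated_unsat_lower_bound
    {m n : ℕ} (hn : 2 < n) (pos neg : Fin m → Fin n → Bool)
    (hunsat : ∀ τ : Fin n → Bool, ∃ i : Fin m, ¬ clauseSat pos neg τ i)
    (k : ℕ) (w : List Letter3)
    (hw : ∃ p : QIter m n k, ∀ s : QIter m n k, runW (deltaIter pos neg k) s w = p) :
    (k + 2) * (n - 1) < w.length := by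
  induction k generalizing w with
  | zero => exact IterAux.base_bound pos neg hn hunsat w hw
  | succ k ihk =>
    obtain ⟨p, hp⟩ := hw
    have hz : p = z0Iter m n (k+1) := by
      rw [← hp (z0Iter m n (k+1)), IterAux.runW_z0Iter]
    subst hz
    have Hscan : ∀ q : St m n, q ≠ .z0 → (IterAux.scan pos neg q w).isSome := by
      intro q hq
      by_contra hno
      have hnone : IterAux.scan pos neg q w = none := by
        cases h : IterAux.scan pos neg q w with
        | none => rfl
        | some z => rw [h] at hno; simp at hno
      obtain ⟨y, hy⟩ := IterAux.scan_none_runW pos neg hnone hq k (z0Iter m n k)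
      have h2 := hp (Sum.inr (⟨q, hq⟩, z0Iter m n k))
      rw [hy, show z0Iter m n (k+1) = Sum.inl (z0Iter m n k) from rfl] at h2
      cases h2
    obtain ⟨q₀, t, hne, hscan, hnt⟩ :=
      IterAux.coreAux pos neg hn hunsat w Hscan w.length [] w le_rfl (by simp) (by simp; omega)
        (IterAux.Harr_nil pos neg)
    have hdrop := IterAux.scan_drop_runW pos neg hscan hne k
    have hsync : ∀ x : QIter m n k, runW (deltaIter pos neg k) x (w.drop t) = z0Iter m n k := by
      intro x
      have h1 := hp (Sum.inr (⟨q₀, hne⟩, x))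
      rw [hdrop x, show z0Iter m n (k+1) = Sum.inl (z0Iter m n k) from rfl] at h1
      exact Sum.inl.inj h1
    have hlt := ihk (w.drop t) ⟨z0Iter m n k, hsync⟩
    have hdl : (w.drop t).length = w.length - t := List.length_drop (i := t) (l := w)
    have htle : t ≤ w.length := (IterAux.scan_some_le pos neg hscan).2
    have hmul : (k + 1 + 2) * (n - 1) = (k + 2) * (n - 1) + (n - 1) := by ring
    omega
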